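/- (Rodrigues' formula) For any nonzero f ∈ ℝ³, exp(S(f)) = I₃ + (sin‖f‖/‖f‖) S(f) + ((1 − cos‖f‖)/‖f‖²) S(f)², and exp(S(f)) ∈ SO(3). -/

import Mathlib

open Matrix

noncomputable section

/-- The hat map `S : ℝ³ → ℝ^{3×3}`, `S(x) y = x × y`. -/
def hat (x : Fin 3 → ℝ) : Matrix (Fin 3) (Fin 3) ℝ :=
  !![0, -x 2, x 1; x 2, 0, -x 0; -x 1, x 0, 0]

/-- Cross product on `ℝ³`. -/
def cross (x y : Fin 3 → ℝ) : Fin 3 → ℝ :=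
  ![x 1 * y 2 - x 2 * y 1, x 2 * y 0 - x 0 * y 2, x 0 * y 1 - x 1 * y 0]

/-- Euclidean norm on `ℝ³`. -/
def enorm3 (x : Fin 3 → ℝ) : ℝ := Real.sqrt (x 0 ^ 2 + x 1 ^ 2 + x 2 ^ 2)

/-- Matrix exponential on `ℝ^{3×3}`. -/
def mexp (A : Matrix (Fin 3) (Fin 3) ℝ) : Matrix (Fin 3) (Fin 3) ℝ :=
  ∑' n : ℕ, ((n.factorial : ℝ)⁻¹) • A ^ n

lemma hat_cube (x : Fin 3 → ℝ) :
    hat x * (hat x * hat x) = (-(x 0^2 + x 1^2 + x 2^2)) • hat x := by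
  ext i j
  fin_cases i <;> fin_cases j <;>
    simp [hat, Matrix.mul_apply, Fin.sum_univ_three] <;> ring

lemma hat_transpose (x : Fin 3 → ℝ) : (hat x)ᵀ = -hat x := by
  ext i j
  fin_cases i <;> fin_cases j <;> simp [hat]

lemma rot_orth (f : Fin 3 → ℝ) (a b : ℝ)
    (key : a^2 + (f 0^2 + f 1^2 + f 2^2) * b^2 = 2*b) :
    ((1 : Matrix (Fin 3) (Fin 3) ℝ) + (-a) • hat f + b • (hat f * hat f)) *
      ((1 : Matrix (Fin 3) (Fin 3) ℝ) + a • hat f + b • (hat f * hat f)) = 1 := by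
  ext i j
  fin_cases i <;> fin_cases j <;>
    simp [hat, Matrix.mul_apply, Fin.sum_univ_three, Matrix.one_apply]
  · linear_combination (f 1^2 + f 2^2) * key
  · linear_combination (-(f 0 * f 1)) * key
  · linear_combination (-(f 0 * f 2)) * key
  · linear_combination (-(f 0 * f 1)) * key
  · linear_combination (f 0^2 + f 2^2) * key
  · linear_combination (-(f 1 * f 2)) * key
  · linear_combination (-(f 0 * f 2)) * key
  · linear_combination (-(f 1 * f 2)) * key
  · linear_combination (f 0^2 + f 1^2) * key

lemma rot_det (f : Fin 3 → ℝ) (a b : ℝ)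
    (key : a^2 + (f 0^2 + f 1^2 + f 2^2) * b^2 = 2*b) :
    ((1 : Matrix (Fin 3) (Fin 3) ℝ) + a • hat f + b • (hat f * hat f)).det = 1 := by
  rw [Matrix.det_fin_three]
  simp [hat, Matrix.mul_apply, Fin.sum_univ_three, Matrix.one_apply]
  linear_combination (f 0^2 + f 1^2 + f 2^2) * key

theorem rodrigues_formula (f : Fin 3 → ℝ) (hf : f ≠ 0) :
    mexp (hat f) = 1 + (Real.sin (enorm3 f) / enorm3 f) • hat f +
      ((1 - Real.cos (enorm3 f)) / (enorm3 f) ^ 2) • (hat f * hat f) ∧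
    (mexp (hat f))ᵀ * mexp (hat f) = 1 ∧ (mexp (hat f)).det = 1 := by
  set θ := enorm3 f with hθdef
  set A := hat f with hAdef
  set a := Real.sin θ / θ with hadef
  set b := (1 - Real.cos θ) / θ^2 with hbdef
  have hspos : 0 < f 0 ^ 2 + f 1 ^ 2 + f 2 ^ 2 := by
    rcases (by simpa [funext_iff, Fin.forall_fin_succ] using hf :
        ¬ (f 0 = 0 ∧ f 1 = 0 ∧ f 2 = 0)) with h
    by_contra hc
    push_neg at hc
    have h0 : f 0 = 0 := by nlinarith [sq_nonneg (f 0), sq_nonneg (f 1), sq_nonneg (f 2)]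
    have h1 : f 1 = 0 := by nlinarith [sq_nonneg (f 0), sq_nonneg (f 1), sq_nonneg (f 2)]
    have h2 : f 2 = 0 := by nlinarith [sq_nonneg (f 0), sq_nonneg (f 1), sq_nonneg (f 2)]
    exact h ⟨h0, h1, h2⟩
  have hθpos : 0 < θ := Real.sqrt_pos.mpr hspos
  have hθne : θ ≠ 0 := ne_of_gt hθpos
  have hs : θ ^ 2 = f 0 ^ 2 + f 1 ^ 2 + f 2 ^ 2 := Real.sq_sqrt hspos.le
  have hA3 : A ^ 3 = (-θ^2) • A := by
    rw [pow_succ, pow_two, mul_assoc, hat_cube, hs]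
  have podd : ∀ n, A ^ (2*n+1) = ((-θ^2)^n) • A := by
    intro n
    induction n with
    | zero => simp
    | succ n ih =>
      have h2 : 2*(n+1)+1 = (2*n+1)+2 := by ring
      rw [h2, pow_add, ih, smul_mul_assoc, ← pow_succ',
        show (2+1 : ℕ) = 3 from rfl, hA3, smul_smul, ← pow_succ]
  have peven : ∀ n, A ^ (2*(n+1)) = ((-θ^2)^n) • (A*A) := by
    intro n
    have h : 2*(n+1) = (2*n+1)+1 := by ring
    rw [h, pow_succ, podd n, smul_mul_assoc]
  have e1 : ∀ n : ℕ, (-θ^2)^n = (-1 : ℝ)^n * θ^(2*n) := by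
    intro n; rw [neg_pow, ← pow_mul]
  have hsum : HasSum (fun n : ℕ => ((n.factorial : ℝ)⁻¹) • A ^ n)
      ((1 + b • (A*A)) + a • A) := by
    refine HasSum.even_add_odd ?_ ?_
    · apply (hasSum_nat_add_iff' 1).mp
      have hc := (hasSum_nat_add_iff' (f := fun n : ℕ =>
        (-1 : ℝ)^n * θ^(2*n) / (2*n).factorial) 1).mpr (Real.hasSum_cos θ)
      have hd := (hc.neg.div_const (θ^2)).smul_const (A*A)
      convert hd using 1
      · rfl
      · funext n
        rw [peven n, smul_smul, e1]
        congr 1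
        have h2 : ((2*(n+1)).factorial : ℝ) ≠ 0 := Nat.cast_ne_zero.mpr (Nat.factorial_ne_zero _)
        field_simp
        ring
      · have : ∑ i ∈ Finset.range 1, (-1 : ℝ)^i * θ^(2*i) / (2*i).factorial = 1 := by
          simp
        rw [this]
        simp [neg_sub, hbdef]
    · have hsin := ((Real.hasSum_sin θ).div_const θ).smul_const A
      convert hsin using 1
      funext n
      rw [podd n, smul_smul, e1]
      congr 1
      have h2 : ((2*n+1).factorial : ℝ) ≠ 0 := Nat.cast_ne_zero.mpr (Nat.factorial_ne_zero _)
      field_simp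
      ring
  have hmexp : mexp A = 1 + a • A + b • (A*A) := by
    rw [mexp, hsum.tsum_eq, add_right_comm]
  have key : a^2 + (f 0^2 + f 1^2 + f 2^2) * b^2 = 2*b := by
    rw [← hs, hadef, hbdef]
    have hpy := Real.sin_sq_add_cos_sq θ
    field_simp
    linear_combination hpy
  refine ⟨hmexp, ?_, ?_⟩
  · rw [hmexp]
    have hT : (1 + a • A + b • (A*A))ᵀ = 1 + (-a) • A + b • (A*A) := by
      rw [transpose_add, transpose_add, transpose_one, transpose_smul, transpose_smul,
        transpose_mul, hAdef, hat_transpose]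
      simp [smul_neg, neg_mul_neg]
    rw [hT]
    exact rot_orth f a b key
  · rw [hmexp]
    exact rot_det f a b key
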